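/- Let G = AH be a minimal decomposition of a semiabelian p-group G. Then A ∩ H ⊆ A^p[A,H]; that is, every element of A ∩ H maps to the identity in A/A^p[A,H]. -/

import Mathlib

open scoped Pointwise
open scoped commutatorElement

/-- The minimal family of finite p-groups containing the trivial group, closed under
semidirect products with abelian p-groups, and closed under quotients. -/
inductive IsSemiabelianP (p : ℕ) : ∀ (G : Type) [Group G], Prop where
  | triv : IsSemiabelianP p PUnit
  | sdp {A H : Type} [CommGroup A] [Group H] [Finite A] [Finite H]
      (hA : IsPGroup p A) (hH' : IsPGroup p H)
      (φ : H →* MulAut A) (hH : IsSemiabelianP p H) : IsSemiabelianP p (A ⋊[φ] H)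
  | quot {G₁ G₂ : Type} [Group G₁] [Group G₂] [Finite G₁] (f : G₁ →* G₂)
      (hf : Function.Surjective f) (hG : IsSemiabelianP p G₁) : IsSemiabelianP p G₂

/-- `A^p[A,H]`: the subgroup generated by `p`-th powers of elements of `A`
together with commutators `[a,h]` for `a ∈ A`, `h ∈ H`. -/
def pPowComm (p : ℕ) {G : Type} [Group G] (A H : Subgroup G) : Subgroup G :=
  Subgroup.closure ({x | ∃ a ∈ A, x = a ^ p} ∪ {x | ∃ a ∈ A, ∃ h ∈ H, x = ⁅a, h⁆})

/-- A decomposition of `G`: an abelian normal subgroup `A` and a proper semiabelian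
subgroup `H` with `G = AH`. -/
structure IsDecomposition (p : ℕ) {G : Type} [Group G] (A H : Subgroup G) : Prop where
  normal : A.Normal
  comm : IsMulCommutative ↥A
  semi : IsSemiabelianP p ↥H
  proper : H ≠ ⊤
  prod : (A : Set G) * (H : Set G) = Set.univ

/-- A minimal decomposition of `G`: `A` is minimal among abelian normal subgroups
admitting a proper semiabelian complement, and `H` is minimal among semiabelian
subgroups with `G = AH`. -/
structure IsMinimalDecomposition (p : ℕ) {G : Type} [Group G] (A H : Subgroup G) extends
    IsDecomposition p A H : Prop where
  minA : ∀ B : Subgroup G, B < A → ¬ ∃ H' : Subgroup G, IsDecomposition p B H'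
  minH : ∀ H' : Subgroup G, H' < H → ¬ (IsSemiabelianP p ↥H' ∧
    (A : Set G) * (H' : Set G) = Set.univ)

/-- For a minimal decomposition `G = AH` of a semiabelian `p`-group,
`A ∩ H ⊆ A^p[A,H]`. -/
theorem inf_le_pPowComm_of_minimalDecomposition (p : ℕ) [Fact p.Prime] (G : Type)
    [Group G] [Finite G] (hG : IsSemiabelianP p G) (A H : Subgroup G)
    (hmin : IsMinimalDecomposition p A H) :
    A ⊓ H ≤ pPowComm p A H := by
  classical
  set N : Subgroup G := pPowComm p A H with hNdef
  have hAnorm := hmin.toIsDecomposition.normal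
  have hAcomm := hmin.toIsDecomposition.comm
  haveI := hAcomm
  have hpow_mem : ∀ a ∈ A, a ^ p ∈ N :=
    fun a ha => Subgroup.subset_closure (Or.inl ⟨a, ha, rfl⟩)
  have hcommut_mem : ∀ a ∈ A, ∀ h ∈ H, ⁅a, h⁆ ∈ N :=
    fun a ha h hh => Subgroup.subset_closure (Or.inr ⟨a, ha, h, hh, rfl⟩)
  have hNA : N ≤ A := by
    rw [hNdef, pPowComm]
    refine (Subgroup.closure_le A).2 ?_
    rintro y (⟨a, ha, rfl⟩ | ⟨a, ha, h, hh, rfl⟩)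
    · exact pow_mem ha p
    · have : a * (h * a⁻¹ * h⁻¹) ∈ A := mul_mem ha (hAnorm.conj_mem _ (inv_mem ha) h)
      simpa [commutatorElement_def, mul_assoc] using this
  have hcomm : ∀ x ∈ A, ∀ y ∈ A, x * y = y * x := by
    intro x hx y hy
    exact congrArg Subtype.val (hAcomm.is_comm.comm ⟨x, hx⟩ ⟨y, hy⟩)
  have hdecomp : ∀ g : G, ∃ a ∈ A, ∃ h ∈ H, g = a * h := by
    intro g
    have hg : g ∈ (A : Set G) * (H : Set G) := by
      rw [hmin.toIsDecomposition.prod]; trivial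
    obtain ⟨a, ha, h, hh, hgh⟩ := hg
    exact ⟨a, ha, h, hh, hgh.symm⟩
  by_contra hcon
  rw [SetLike.le_def] at hcon
  push_neg at hcon
  obtain ⟨x, hxAH, hxN⟩ := hcon
  have hxA : x ∈ A := hxAH.1
  set N' : Subgroup ↥A := N.subgroupOf A with hN'def
  set K' : Subgroup ↥A := (A ⊓ H).subgroupOf A with hK'def
  let π : ↥A →* (↥A ⧸ N') := QuotientGroup.mk' N'
  have hker : ∀ a : ↥A, π a = 1 ↔ (a : G) ∈ N := by
    intro a
    rw [show π a = QuotientGroup.mk a from rfl, QuotientGroup.eq_one_iff]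
    exact Subgroup.mem_subgroupOf
  have hQp : ∀ q : ↥A ⧸ N', q ^ p = 1 := by
    intro q
    induction q using QuotientGroup.induction_on with
    | H a =>
      rw [← QuotientGroup.mk_pow, QuotientGroup.eq_one_iff]
      exact Subgroup.mem_subgroupOf.2 (by simpa using hpow_mem (a : G) a.2)
  letI : CommGroup (↥A ⧸ N') := { (inferInstance : Group (↥A ⧸ N')) with
    mul_comm := fun x y => by
      induction x using QuotientGroup.induction_on with | H a => ?_
      induction y using QuotientGroup.induction_on with | H b => ?_
      exact congrArg (QuotientGroup.mk (s := N')) (hAcomm.is_comm.comm a b) }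
  haveI : Module (ZMod p) (Additive (↥A ⧸ N')) :=
    AddCommGroup.zmodModule (by intro q; exact congrArg Additive.ofMul (hQp q.toMul))
  let e : Subgroup (↥A ⧸ N') ≃o Submodule (ZMod p) (Additive (↥A ⧸ N')) :=
    Subgroup.toAddSubgroup.trans (AddSubgroup.toZModSubmodule p)
  obtain ⟨Uc, hUc⟩ := Submodule.exists_isCompl (e (K'.map π))
  set U : Subgroup (↥A ⧸ N') := e.symm Uc with hUdef
  have hsup : K'.map π ⊔ U = ⊤ := by
    apply e.injective
    rw [map_sup, map_top, hUdef, OrderIso.apply_symm_apply]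
    exact hUc.sup_eq_top
  have hinf : K'.map π ⊓ U = ⊥ := by
    apply e.injective
    rw [map_inf, map_bot, hUdef, OrderIso.apply_symm_apply]
    exact hUc.inf_eq_bot
  set B : Subgroup G := (U.comap π).map A.subtype with hBdef
  have hBA : B ≤ A := by
    rintro b ⟨b', hb', rfl⟩; exact b'.2
  have hmemB : ∀ a : ↥A, π a ∈ U → (a : G) ∈ B := fun a ha => ⟨a, ha, rfl⟩
  have hmemB' : ∀ (g : G) (hg : g ∈ A), g ∈ B → π ⟨g, hg⟩ ∈ U := by
    rintro g hg ⟨b', hb', heq⟩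
    have hb'' : b' = ⟨g, hg⟩ := Subtype.ext heq
    rwa [← hb'']
  have hNB : N ≤ B := by
    intro n hn
    refine hmemB ⟨n, hNA hn⟩ ?_
    have : π ⟨n, hNA hn⟩ = 1 := (hker _).2 hn
    rw [this]
    exact U.one_mem
  have hcover : ∀ a ∈ A, ∃ b ∈ B, ∃ k ∈ A ⊓ H, a = b * k := by
    intro a ha
    have hmem : π ⟨a, ha⟩ ∈ K'.map π ⊔ U := by rw [hsup]; trivial
    obtain ⟨w, hw, u, hu, heq⟩ := Subgroup.mem_sup.1 hmem
    obtain ⟨k, hk, rfl⟩ := hw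
    have hkAH : (k : G) ∈ A ⊓ H := Subgroup.mem_subgroupOf.1 hk
    have hak : a * (k : G)⁻¹ ∈ A := mul_mem ha (inv_mem hkAH.1)
    refine ⟨a * (k : G)⁻¹, ?_, k, hkAH, by group⟩
    refine hmemB ⟨a * (k : G)⁻¹, hak⟩ ?_
    have h1 : (⟨a * (k : G)⁻¹, hak⟩ : ↥A) = ⟨a, ha⟩ * k⁻¹ := rfl
    rw [h1, map_mul, map_inv, ← heq, mul_comm (π k) u, mul_inv_cancel_right]
    exact hu
  have hxB : x ∉ B := by
    intro hxB
    have h1 : π ⟨x, hxA⟩ ∈ U := hmemB' x hxA hxB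
    have h2 : π ⟨x, hxA⟩ ∈ K'.map π := ⟨⟨x, hxA⟩, Subgroup.mem_subgroupOf.2 hxAH, rfl⟩
    have h3 : π ⟨x, hxA⟩ ∈ K'.map π ⊓ U := ⟨h2, h1⟩
    rw [hinf] at h3
    exact hxN ((hker _).1 h3)
  have hBlt : B < A := lt_of_le_of_ne hBA (fun h => hxB (by rw [h]; exact hxA))
  have hBnormal : B.Normal := by
    constructor
    intro b hb g
    obtain ⟨a, ha, h, hh, rfl⟩ := hdecomp g
    have hbA : b ∈ A := hBA hb
    have h1 : h * b * h⁻¹ = b * ⁅b⁻¹, h⁆ := by group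
    have h2 : b * ⁅b⁻¹, h⁆ ∈ B := mul_mem hb (hNB (hcommut_mem b⁻¹ (inv_mem hbA) h hh))
    have h3 : h * b * h⁻¹ ∈ A := by simpa [mul_assoc] using hAnorm.conj_mem b hbA h
    have h4 : a * h * b * (a * h)⁻¹ = a * (h * b * h⁻¹) * a⁻¹ := by group
    rw [h4, hcomm a ha _ h3, mul_inv_cancel_right, h1]
    exact h2
  have hBcomm : IsMulCommutative ↥B :=
    ⟨⟨fun a b => Subtype.ext (hcomm a (hBA a.2) b (hBA b.2))⟩⟩
  have hBprod : (B : Set G) * (H : Set G) = Set.univ := by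
    apply Set.eq_univ_of_forall
    intro g
    obtain ⟨a, ha, h, hh, rfl⟩ := hdecomp g
    obtain ⟨b, hb, k, hk, rfl⟩ := hcover a ha
    exact Set.mem_mul.2 ⟨b, hb, k * h, mul_mem hk.2 hh, by group⟩
  exact hmin.minA B hBlt
    ⟨H, hBnormal, hBcomm, hmin.toIsDecomposition.semi, hmin.toIsDecomposition.proper, hBprod⟩
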